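/- Let S_i = (u, v, w) be a set of the E3C instance. The only two cliques of the gadget graph that contain the edge c_iw are {c_i, w} and {b_i, c_i, w}. -/

import Mathlib

open scoped Classical

/-- Vertex set of the gadget graph: element vertices `u` (coded `.inl (.inl u)`) and
`u'` (coded `.inl (.inr u)`) for each `u : U`, and triangle vertices
`a_i, b_i, c_i` (coded `.inr (i, 0/1/2)`) for each `i : Fin m`. -/
abbrev GVert (U : Type*) (m : ℕ) := (U ⊕ U) ⊕ (Fin m × Fin 3)

section Gadget

variable {U : Type*} {m : ℕ}

/-- The element vertex `u`. -/
def el (u : U) : GVert U m := Sum.inl (Sum.inl u)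

/-- The element vertex `u'`. -/
def el' (u : U) : GVert U m := Sum.inl (Sum.inr u)

/-- The triangle vertex `a_i`. -/
def va (i : Fin m) : GVert U m := Sum.inr (i, 0)

/-- The triangle vertex `b_i`. -/
def vb (i : Fin m) : GVert U m := Sum.inr (i, 1)

/-- The triangle vertex `c_i`. -/
def vc (i : Fin m) : GVert U m := Sum.inr (i, 2)

/-- The twelve gadget edges `E_i` for the set `S i = (u, v, w)`, namely
`a_ib_i, a_ic_i, b_ic_i, a_iu, b_iu, a_iu', a_iv, c_iv, c_iv', b_iw, c_iw, b_iw'`. -/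
def Ei (S : Fin m → U × U × U) (i : Fin m) : Set (Sym2 (GVert U m)) :=
  {s(va i, vb i), s(va i, vc i), s(vb i, vc i),
   s(va i, el (S i).1), s(vb i, el (S i).1), s(va i, el' (S i).1),
   s(va i, el (S i).2.1), s(vc i, el (S i).2.1), s(vc i, el' (S i).2.1),
   s(vb i, el (S i).2.2), s(vc i, el (S i).2.2), s(vb i, el' (S i).2.2)}

/-- All the edges of the gadget graph: an element-edge `uu'` for every `u : U`,
together with the twelve gadget edges of `E_i` for every `i : Fin m`. -/
def gadgetEdges (S : Fin m → U × U × U) : Set (Sym2 (GVert U m)) :=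
  {e | ∃ u : U, e = s(el u, el' u)} ∪ {e | ∃ i : Fin m, e ∈ Ei S i}

/-- The gadget graph of the E3C instance `S`. -/
def gadgetGraph (S : Fin m → U × U × U) : SimpleGraph (GVert U m) :=
  SimpleGraph.fromEdgeSet (gadgetEdges S)

/-- `S` lists genuine 3-element subsets: the three listed elements of each `S i`
are pairwise distinct. -/
def E3CInstance (S : Fin m → U × U × U) : Prop :=
  ∀ i : Fin m, (S i).1 ≠ (S i).2.1 ∧ (S i).1 ≠ (S i).2.2 ∧ (S i).2.1 ≠ (S i).2.2

/-- `T` is a solution of the E3C instance `S`: a choice of `q` of the sets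
whose union is all of `U`. -/
def E3CSolution (q : ℕ) (S : Fin m → U × U × U) (T : Finset (Fin m)) : Prop :=
  T.card = q ∧ ∀ x : U, ∃ i ∈ T, x = (S i).1 ∨ x = (S i).2.1 ∨ x = (S i).2.2

end Gadget

private theorem aux_adj {U : Type*} [DecidableEq U] {m : ℕ} (S : Fin m → U × U × U)
    (hS : E3CInstance S) (i : Fin m) (u v w : U) (hSi : S i = (u, v, w)) (x : GVert U m)
    (h1 : (gadgetGraph S).Adj x (vc i)) (h2 : (gadgetGraph S).Adj x (el w)) : x = vb i := by
  have h := hS i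
  rw [hSi] at h
  simp only [gadgetGraph, SimpleGraph.fromEdgeSet_adj, gadgetEdges, Set.mem_union,
    Set.mem_setOf_eq, Ei, Set.mem_insert_iff, Set.mem_singleton_iff, Sym2.eq_iff,
    el, el', va, vb, vc] at h1 h2
  obtain ⟨h1, hx1⟩ := h1
  obtain ⟨h2, hx2⟩ := h2
  rcases h1 with ⟨a, ha⟩ | ⟨j, hj⟩
  · rcases ha with ⟨-, h'⟩ | ⟨-, h'⟩ <;> exact absurd h' (by simp)
  · rcases h2 with ⟨a, ha⟩ | ⟨k, hk⟩
    · obtain ⟨rfl, rfl⟩ : x = Sum.inl (Sum.inr w) ∧ a = w := by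
        rcases ha with ⟨-, h'⟩ | ⟨h', h''⟩
        · exact absurd h' (by simp)
        · have h1 : a = w := by simpa using h''.symm
          subst h1
          exact ⟨by simpa using h', rfl⟩
      simp only [Sum.inl.injEq, Sum.inr.injEq, Prod.mk.injEq, reduceCtorEq, false_and, and_false,
        false_or, or_false, true_and, and_true] at hj
      rcases hj with ⟨-, -, h0⟩ | ⟨hv, rfl⟩ | ⟨-, -, h0⟩
      · exact absurd h0 (by decide)
      · rw [hSi] at hv
        exact absurd hv.symm h.2.2
      · exact absurd h0 (by decide)
    · simp_all
      rcases hj with ⟨rfl, rfl⟩ | ⟨rfl, rfl⟩ | ⟨rfl, rfl⟩ | ⟨rfl, rfl⟩ | ⟨rfl, rfl⟩ <;>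
        rcases hk with ⟨hx, hw⟩ | ⟨hx, hw⟩ | ⟨hx, hw⟩ | ⟨hx, hw⟩ | ⟨hx, hw⟩ | ⟨hx, hw⟩ <;>
        first
          | (simp only [Sum.inr.injEq, Prod.mk.injEq] at hx
             obtain ⟨rfl, h0⟩ := hx
             first
               | exact absurd h0 (by decide)
               | (rw [hSi] at hw; simp only at hw; subst hw; simp_all [vb]))
          | (simp only [Sum.inr.injEq, Prod.mk.injEq, and_true] at hx
             subst hx
             first
               | rfl
               | (rw [hSi] at hw; simp_all [vb]))
          | simp at hx

/-- Let `S i = (u, v, w)` be a set of the E3C instance. The only two cliques of the gadget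
graph that contain the edge `c_iw` are `{c_i, w}` and `{b_i, c_i, w}`. -/
theorem stmt_7 {U : Type*} [DecidableEq U] {m : ℕ} (S : Fin m → U × U × U)
    (hS : E3CInstance S) (i : Fin m) (u v w : U) (hSi : S i = (u, v, w))
    (D : Finset (GVert U m)) :
    ((gadgetGraph S).IsClique (D : Set (GVert U m)) ∧ vc i ∈ D ∧ el w ∈ D) ↔
      (D = {vc i, el w} ∨ D = {vb i, vc i, el w}) := by
  have hbc : (vb i : GVert U m) ≠ vc i := by simp [vb, vc]
  have hcw : (vc i : GVert U m) ≠ el w := by simp [vc, el]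
  have hbw : (vb i : GVert U m) ≠ el w := by simp [vb, el]
  have memEi : ∀ e ∈ Ei S i, e ∈ gadgetEdges S := fun e he => Or.inr ⟨i, he⟩
  have adjbc : (gadgetGraph S).Adj (vb i) (vc i) := by
    rw [gadgetGraph, SimpleGraph.fromEdgeSet_adj]
    exact ⟨memEi _ (by simp [Ei]), hbc⟩
  have adjcw : (gadgetGraph S).Adj (vc i) (el w) := by
    rw [gadgetGraph, SimpleGraph.fromEdgeSet_adj]
    refine ⟨memEi _ ?_, hcw⟩
    simp [Ei, hSi]
  have adjbw : (gadgetGraph S).Adj (vb i) (el w) := by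
    rw [gadgetGraph, SimpleGraph.fromEdgeSet_adj]
    refine ⟨memEi _ ?_, hbw⟩
    simp [Ei, hSi]
  constructor
  · rintro ⟨hcl, hc, hw⟩
    have hsub : ∀ x ∈ D, x = vb i ∨ x = vc i ∨ x = el w := by
      intro x hx
      by_cases h1 : x = vc i
      · exact Or.inr (Or.inl h1)
      by_cases h2 : x = el w
      · exact Or.inr (Or.inr h2)
      exact Or.inl (aux_adj S hS i u v w hSi x (hcl hx hc h1) (hcl hx hw h2))
    by_cases hb : vb i ∈ D
    · right
      ext x
      simp only [Finset.mem_insert, Finset.mem_singleton]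
      constructor
      · exact hsub x
      · rintro (rfl | rfl | rfl) <;> assumption
    · left
      ext x
      simp only [Finset.mem_insert, Finset.mem_singleton]
      constructor
      · intro hx
        rcases hsub x hx with rfl | h' | h'
        · exact absurd hx hb
        · exact Or.inl h'
        · exact Or.inr h'
      · rintro (rfl | rfl) <;> assumption
  · rintro (rfl | rfl)
    · refine ⟨?_, by simp, by simp⟩
      intro x hx y hy hne
      simp only [Finset.coe_insert, Finset.coe_singleton, Set.mem_insert_iff,
        Set.mem_singleton_iff] at hx hy
      rcases hx with rfl | rfl <;> rcases hy with rfl | rfl <;>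
        first | exact absurd rfl hne | exact adjcw | exact adjcw.symm
    · refine ⟨?_, by simp, by simp⟩
      intro x hx y hy hne
      simp only [Finset.coe_insert, Finset.coe_singleton, Set.mem_insert_iff,
        Set.mem_singleton_iff] at hx hy
      rcases hx with rfl | rfl | rfl <;> rcases hy with rfl | rfl | rfl <;>
        first | exact absurd rfl hne | exact adjbc | exact adjbc.symm | exact adjcw |
          exact adjcw.symm | exact adjbw | exact adjbw.symm
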